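/- Let (X, τ) be a topological H₂-module, B an H₂-convex, H₂-balanced, H₂-absorbing subset of X, q_B the H₂-valued Minkowski functional of B, A_B = {x ∈ X : q_B(x) ≺ 1} and C_B = {x ∈ X : q_B(x) ⪯ 1}. Then: (i) interior(B) ⊆ A_B ⊆ B ⊆ C_B ⊆ closure(B); (ii) if B is open, then B = A_B; (iii) if B is closed, then B = C_B; (iv) if q_B is continuous, then interior(B) = A_B. -/

import Mathlib

open Pointwise

/-- The ring of bihyperbolic numbers in its idempotent representation:
componentwise operations on `Fin 4 → ℝ`. -/
abbrev D : Type := Fin 4 → ℝ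

/-- The idempotents `eᵢ`. -/
noncomputable def e (i : Fin 4) : D := Pi.single i 1

/-- The bihyperbolic-valued modulus: componentwise absolute value. -/
def dabs (a : D) : D := fun i => |a i|

/-- Strict componentwise inequality `a ≺ b`. -/
def sLt (a b : D) : Prop := ∀ i, a i < b i

/-- The ring homomorphism `ℝ → D` sending `r` to the constant function `r`. -/
def rconst (a : ℝ) : D := fun _ => a

/-- A set `B` in an `H₂`-module is `H₂`-balanced if `c • x ∈ B` whenever
`x ∈ B` and `|c| ⪯ 1`. -/
def H2Balanced {X : Type*} [AddCommGroup X] [Module D X] (B : Set X) : Prop :=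
  ∀ x ∈ B, ∀ c : D, dabs c ≤ 1 → c • x ∈ B

/-- A set `B` in an `H₂`-module is `H₂`-convex if `c • x + (1 - c) • y ∈ B`
for all `x, y ∈ B` and `0 ⪯ c ⪯ 1`. -/
def H2Convex {X : Type*} [AddCommGroup X] [Module D X] (B : Set X) : Prop :=
  ∀ x ∈ B, ∀ y ∈ B, ∀ c : D, 0 ≤ c → c ≤ 1 → c • x + (1 - c) • y ∈ B

/-- A set `B` in an `H₂`-module is `H₂`-absorbing if every `x` admits `ε ≻ 0`
with `c • x ∈ B` whenever `0 ⪯ c ⪯ ε`. -/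
def H2Absorbing {X : Type*} [AddCommGroup X] [Module D X] (B : Set X) : Prop :=
  ∀ x : X, ∃ ε : D, sLt 0 ε ∧ ∀ c : D, 0 ≤ c → c ≤ ε → c • x ∈ B

/-- An `H₂`-valued seminorm. -/
def IsH2Seminorm {X : Type*} [AddCommGroup X] [Module D X] (p : X → D) : Prop :=
  (∀ c : D, ∀ x : X, p (c • x) = dabs c * p x) ∧ ∀ x y : X, p (x + y) ≤ p x + p y

/-- An `H₂`-valued norm. -/
def IsH2Norm {X : Type*} [AddCommGroup X] [Module D X] (N : X → D) : Prop :=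
  (∀ x : X, N x = 0 ↔ x = 0) ∧ (∀ c : D, ∀ x : X, N (c • x) = dabs c * N x) ∧
    ∀ x y : X, N (x + y) ≤ N x + N y

/-- A subset of a topological `H₂`-module is bounded if every neighbourhood of `0`
absorbs it. -/
def H2Bounded {X : Type*} [AddCommGroup X] [Module D X] [TopologicalSpace X]
    (B : Set X) : Prop :=
  ∀ U ∈ nhds (0 : X), ∃ c : D, sLt 0 c ∧ B ⊆ c • U

/-- The `H₂`-valued Minkowski functional of a set `B`, defined componentwise. -/
noncomputable def minkowski {X : Type*} [AddCommGroup X] [Module D X]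
    (B : Set X) (x : X) : D :=
  fun i => sInf {t : ℝ | ∃ α : D, sLt 0 α ∧ x ∈ α • B ∧ α i = t}

section Aux

variable {X : Type*} [AddCommGroup X] [Module D X]

lemma D_inv_mul {α : D} (h : sLt 0 α) : α⁻¹ * α = 1 :=
  funext fun i => inv_mul_cancel₀ (h i).ne'

lemma D_mul_inv {α : D} (h : sLt 0 α) : α * α⁻¹ = 1 :=
  funext fun i => mul_inv_cancel₀ (h i).ne'

lemma memSmulIff {B : Set X} {α : D} (hα : sLt 0 α) {x : X} :
    x ∈ α • B ↔ α⁻¹ • x ∈ B := by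
  constructor
  · rintro ⟨b, hb, rfl⟩
    rw [smul_smul, D_inv_mul hα, one_smul]; exact hb
  · intro h
    refine ⟨α⁻¹ • x, h, ?_⟩
    show α • α⁻¹ • x = x
    rw [smul_smul, D_mul_inv hα, one_smul]

/-- The gauge set of `x`. -/
def gset (B : Set X) (x : X) : Set D := {α : D | sLt 0 α ∧ x ∈ α • B}

lemma gset_nonempty {B : Set X} (habs : H2Absorbing B) (x : X) :
    (gset B x).Nonempty := by
  obtain ⟨ε, hε, h⟩ := habs x
  have hmem : ε • x ∈ B := h ε (fun i => (hε i).le) le_rfl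
  have hpos : sLt 0 ε⁻¹ := fun i => inv_pos.mpr (hε i)
  refine ⟨ε⁻¹, hpos, (memSmulIff hpos).mpr ?_⟩
  rw [inv_inv]
  exact hmem

lemma minkowski_le_of_mem {B : Set X} {x : X} {α : D} (hα : α ∈ gset B x) (i : Fin 4) :
    minkowski B x i ≤ α i := by
  refine csInf_le ⟨0, ?_⟩ ⟨α, hα.1, hα.2, rfl⟩
  rintro t ⟨β, h1, _, rfl⟩
  exact (h1 i).le

lemma exists_gset_lt {B : Set X} (habs : H2Absorbing B) {x : X} {i : Fin 4} {r : ℝ}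
    (h : minkowski B x i < r) : ∃ α ∈ gset B x, α i < r := by
  have hne : {t : ℝ | ∃ β : D, sLt 0 β ∧ x ∈ β • B ∧ β i = t}.Nonempty := by
    obtain ⟨α, h1, h2⟩ := gset_nonempty habs x
    exact ⟨α i, α, h1, h2, rfl⟩
  obtain ⟨t, ⟨β, h1, h2, rfl⟩, hlt⟩ := exists_lt_of_csInf_lt hne h
  exact ⟨β, ⟨h1, h2⟩, hlt⟩

lemma gset_inf {B : Set X} (hconv : H2Convex B) {x : X} :
    ∀ α ∈ gset B x, ∀ β ∈ gset B x, α ⊓ β ∈ gset B x := by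
  rintro α ⟨hα, hxα⟩ β ⟨hβ, hxβ⟩
  have hγ : sLt 0 (α ⊓ β) := by
    intro i
    simp only [Pi.inf_apply, lt_inf_iff]
    exact ⟨hα i, hβ i⟩
  set δ : D := fun i => if α i ≤ β i then 1 else 0 with hδ
  have hδ0 : (0 : D) ≤ δ := by
    intro i; by_cases h : α i ≤ β i <;> simp [hδ, h]
  have hδ1 : δ ≤ (1 : D) := by
    intro i; by_cases h : α i ≤ β i <;> simp [hδ, h]
  have hkey : (α ⊓ β)⁻¹ = δ * α⁻¹ + (1 - δ) * β⁻¹ := by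
    funext i
    by_cases h : α i ≤ β i
    · simp [hδ, h, min_eq_left h]
    · simp [hδ, h, min_eq_right (le_of_not_ge h)]
  refine ⟨hγ, (memSmulIff hγ).mpr ?_⟩
  have ha : α⁻¹ • x ∈ B := (memSmulIff hα).mp hxα
  have hb : β⁻¹ • x ∈ B := (memSmulIff hβ).mp hxβ
  have : (α ⊓ β)⁻¹ • x = δ • (α⁻¹ • x) + (1 - δ) • (β⁻¹ • x) := by
    rw [smul_smul, smul_smul, ← add_smul, ← hkey]
  rw [this]
  exact hconv _ ha _ hb δ hδ0 hδ1

lemma exists_gset_sLt {B : Set X} (hconv : H2Convex B) (habs : H2Absorbing B)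
    {x : X} {μ : D} (h : ∀ i, minkowski B x i < μ i) :
    ∃ α ∈ gset B x, sLt α μ := by
  choose c hc1 hc2 using fun i => exists_gset_lt habs (h i)
  have hne : (Finset.univ : Finset (Fin 4)).Nonempty := ⟨0, Finset.mem_univ 0⟩
  refine ⟨Finset.univ.inf' hne c, ?_, ?_⟩
  · exact Finset.inf'_mem _ (gset_inf hconv) _ hne _ (fun i _ => hc1 i)
  · intro j
    exact lt_of_le_of_lt (Finset.inf'_le c (Finset.mem_univ j) j) (hc2 j)

end Aux

/-- For an `H₂`-convex, `H₂`-balanced, `H₂`-absorbing set `B` with Minkowski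
functional `q_B`, `A_B = {x : q_B x ≺ 1}`, `C_B = {x : q_B x ⪯ 1}`:
(i) `interior B ⊆ A_B ⊆ B ⊆ C_B ⊆ closure B`; (ii) if `B` is open then `B = A_B`;
(iii) if `B` is closed then `B = C_B`; (iv) if `q_B` is continuous then
`interior B = A_B`. -/
theorem minkowski_ball_inclusions {X : Type*} [AddCommGroup X] [Module D X]
    [TopologicalSpace X] [T2Space X] [ContinuousAdd X] [ContinuousSMul D X]
    (B : Set X) (hconv : H2Convex B) (hbal : H2Balanced B) (habs : H2Absorbing B) :
    (interior B ⊆ {x : X | sLt (minkowski B x) 1} ∧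
        {x : X | sLt (minkowski B x) 1} ⊆ B ∧
        B ⊆ {x : X | minkowski B x ≤ 1} ∧
        {x : X | minkowski B x ≤ 1} ⊆ closure B) ∧
      (IsOpen B → B = {x : X | sLt (minkowski B x) 1}) ∧
      (IsClosed B → B = {x : X | minkowski B x ≤ 1}) ∧
      (Continuous (minkowski B) → interior B = {x : X | sLt (minkowski B x) 1}) := by
  -- continuity of `t ↦ rconst t • x`
  have hrc : Continuous (rconst : ℝ → D) := continuous_pi fun _ => continuous_id
  have hrc1 : rconst 1 = (1 : D) := rfl
  have hcont : ∀ x : X, Continuous fun t : ℝ => rconst t • x := fun x =>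
    Continuous.smul hrc (continuous_const : Continuous fun _ : ℝ => x)
  -- A_B ⊆ B
  have hAB : {x : X | sLt (minkowski B x) 1} ⊆ B := by
    intro x hx
    obtain ⟨α, hαg, hα1⟩ := exists_gset_sLt hconv habs (μ := 1) hx
    obtain ⟨b, hb, rfl⟩ := hαg.2
    refine hbal b hb α ?_
    intro i
    have h0 : (0 : ℝ) < α i := hαg.1 i
    have h1 : α i < 1 := hα1 i
    simpa [dabs, abs_of_pos h0] using h1.le
  -- B ⊆ C_B
  have hBC : B ⊆ {x : X | minkowski B x ≤ 1} := by
    intro x hx i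
    have h1 : (1 : D) ∈ gset B x := by
      refine ⟨fun i => one_pos, ⟨x, hx, one_smul _ _⟩⟩
    simpa using minkowski_le_of_mem h1 i
  -- interior B ⊆ A_B
  have hIA : interior B ⊆ {x : X | sLt (minkowski B x) 1} := by
    intro x hx
    have hc : ContinuousAt (fun t : ℝ => rconst t • x) 1 := (hcont x).continuousAt
    have h1 : rconst 1 • x = x := by rw [hrc1, one_smul]
    have hev : ∀ᶠ t in nhds (1 : ℝ), rconst t • x ∈ interior B :=
      hc.eventually_mem (isOpen_interior.mem_nhds (by show rconst 1 • x ∈ interior B; rw [h1]; exact hx))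
    obtain ⟨t, ht1, htB⟩ := hev.exists_gt
    have ht0 : (0 : ℝ) < t := lt_trans one_pos ht1
    have hα : rconst t⁻¹ ∈ gset B x := by
      refine ⟨fun i => inv_pos.mpr ht0, ⟨rconst t • x, interior_subset htB, ?_⟩⟩
      show rconst t⁻¹ • rconst t • x = x
      rw [smul_smul]
      have : rconst t⁻¹ * rconst t = 1 := funext fun i => inv_mul_cancel₀ ht0.ne'
      rw [this, one_smul]
    intro i
    have := minkowski_le_of_mem hα i
    have hlt : t⁻¹ < 1 := inv_lt_one_of_one_lt₀ ht1
    calc minkowski B x i ≤ t⁻¹ := this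
      _ < 1 := hlt
  -- C_B ⊆ closure B
  have hCc : {x : X | minkowski B x ≤ 1} ⊆ closure B := by
    intro x hx
    have key : ∀ s : ℝ, 0 < s → s < 1 → rconst s • x ∈ B := by
      intro s hs0 hs1
      have h : ∀ i, minkowski B x i < (rconst s⁻¹) i := by
        intro i
        have h1 : minkowski B x i ≤ 1 := by simpa using hx i
        have h2 : (1 : ℝ) < s⁻¹ := (one_lt_inv₀ hs0).mpr hs1
        exact lt_of_le_of_lt h1 h2
      obtain ⟨α, hαg, hαlt⟩ := exists_gset_sLt hconv habs h
      obtain ⟨b, hb, hbe⟩ := hαg.2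
      have heq : rconst s • x = (rconst s * α) • b := by rw [← hbe, smul_smul]
      rw [heq]
      refine hbal b hb _ ?_
      intro i
      have h0 : (0 : ℝ) < α i := hαg.1 i
      have h2 : α i < s⁻¹ := hαlt i
      have h3 : s * α i < 1 := by
        have := (mul_lt_mul_of_pos_left h2 hs0)
        rwa [mul_inv_cancel₀ hs0.ne'] at this
      have h4 : (0 : ℝ) < s * α i := mul_pos hs0 h0
      simpa [dabs, rconst, abs_of_pos h4] using h3.le
    have hg : Filter.Tendsto (fun t : ℝ => rconst t • x)
        (nhdsWithin (1 : ℝ) (Set.Iio 1)) (nhds x) := by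
      simpa only [hrc1, one_smul] using
        ((hcont x).tendsto 1).mono_left nhdsWithin_le_nhds
    have hev : ∀ᶠ t in nhdsWithin (1 : ℝ) (Set.Iio 1), rconst t • x ∈ B := by
      have h0 : ∀ᶠ t in nhdsWithin (1 : ℝ) (Set.Iio 1), (0 : ℝ) < t :=
        (eventually_gt_nhds one_pos).filter_mono nhdsWithin_le_nhds
      have h1 : ∀ᶠ t in nhdsWithin (1 : ℝ) (Set.Iio 1), t ∈ Set.Iio 1 :=
        eventually_mem_nhdsWithin
      filter_upwards [h0, h1] with t ht0 ht1
      exact key t ht0 ht1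
    exact mem_closure_of_tendsto hg hev
  refine ⟨⟨hIA, hAB, hBC, hCc⟩, ?_, ?_, ?_⟩
  · intro hB
    refine subset_antisymm (fun x hx => hIA ?_) hAB
    rwa [hB.interior_eq]
  · intro hB
    refine subset_antisymm hBC fun x hx => ?_
    have := hCc hx
    rwa [hB.closure_eq] at this
  · intro hq
    refine subset_antisymm hIA ?_
    have hopen : IsOpen {x : X | sLt (minkowski B x) 1} := by
      have heq : {x : X | sLt (minkowski B x) 1}
          = minkowski B ⁻¹' (⋂ i, {a : D | a i < 1}) := by
        ext y
        simp [sLt, Set.mem_iInter]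
      rw [heq]
      exact (isOpen_iInter_of_finite fun i =>
        isOpen_lt (continuous_apply i) continuous_const).preimage hq
    exact interior_maximal hAB hopen
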